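/- Let a_⊥ satisfy u(a_⊥) = 1, and let X, X' be disjoint finite sets of items (not containing a_⊥) such that w(a) > w(a_⊥) for every a in X ∪ X'. Then f((DesW(X), a_⊥), u, w) ≤ f((DesW(X ∪ X'), a_⊥), u, w), where DesW(Y) denotes the list of items of Y sorted in descending order of w. In words, including additional items with weight above w(a_⊥) never decreases the optimally-ordered cascading reward. -/

import Mathlib

/-- The cascading reward function. -/
noncomputable def cascadeF {α : Type*} (u w : α → ℝ) : List α → ℝ
  | [] => 0
  | a :: t => u a * w a + (1 - u a) * cascadeF u w t

section Aux

set_option linter.unusedSectionVars false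

variable {α : Type*} [DecidableEq α] (u w : α → ℝ) (bot : α)

lemma casc_lb (hu : ∀ a, 0 ≤ u a ∧ u a ≤ 1) (hbot : u bot = 1) :
    ∀ L : List α, (∀ a ∈ L, w bot ≤ w a) → w bot ≤ cascadeF u w (L ++ [bot])
  | [], _ => by simp [cascadeF, hbot]
  | a :: t, h => by
    have ih := casc_lb hu hbot t (fun x hx => h x (List.mem_cons_of_mem _ hx))
    have ha := h a List.mem_cons_self
    have h1 := (hu a).1; have h2 := (hu a).2
    simp only [List.cons_append, cascadeF, List.append_eq]
    nlinarith

lemma casc_ub (hu : ∀ a, 0 ≤ u a ∧ u a ≤ 1) (hbot : u bot = 1) :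
    ∀ (L : List α) (W : ℝ), (∀ a ∈ L, w a ≤ W) → w bot ≤ W →
      cascadeF u w (L ++ [bot]) ≤ W
  | [], W, _, hb => by
    simp only [List.nil_append, cascadeF, List.append_eq, hbot]
    linarith
  | a :: t, W, h, hb => by
    have ih := casc_ub hu hbot t W (fun x hx => h x (List.mem_cons_of_mem _ hx)) hb
    have ha := h a List.mem_cons_self
    have h1 := (hu a).1; have h2 := (hu a).2
    simp only [List.cons_append, cascadeF, List.append_eq]
    nlinarith

lemma casc_move_front (hu : ∀ a, 0 ≤ u a ∧ u a ≤ 1) :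
    ∀ (L : List α) (b : α), b ∈ L → (∀ a ∈ L, w a ≤ w b) →
      cascadeF u w (L ++ [bot]) ≤
        u b * w b + (1 - u b) * cascadeF u w (L.erase b ++ [bot])
  | [], b, hb, _ => by simp at hb
  | c :: t, b, hb, h => by
    by_cases hcb : c = b
    · subst hcb
      simp [cascadeF, List.erase_cons_head]
    · have hbt : b ∈ t := by
        rcases List.mem_cons.mp hb with h' | h'
        · exact absurd h'.symm hcb
        · exact h'
      have ih := casc_move_front hu t b hbt (fun x hx => h x (List.mem_cons_of_mem _ hx))
      have hc := h c List.mem_cons_self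
      rw [List.erase_cons_tail (by simpa using fun h' => hcb h')]
      simp only [List.cons_append, cascadeF, List.append_eq]
      have h1 := (hu c).1; have h2 := (hu c).2
      have h3 := (hu b).1; have h4 := (hu b).2
      nlinarith [ih, mul_nonneg h1 h3]

lemma casc_main (hu : ∀ a, 0 ≤ u a ∧ u a ≤ 1) (hbot : u bot = 1) :
    ∀ (LU L : List α), LU.Pairwise (fun a b => w b ≤ w a) →
      (∀ a ∈ LU, w bot < w a) → (↑L : Multiset α) ≤ ↑LU →
      cascadeF u w (L ++ [bot]) ≤ cascadeF u w (LU ++ [bot]) := by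
  intro LU
  induction LU with
  | nil =>
    intro L _ _ hle
    have : L = [] := by simpa using hle
    subst this; rfl
  | cons b T ih =>
    intro L hs hw hle
    have hsT : T.Pairwise (fun a b => w b ≤ w a) := hs.of_cons
    have hwT : ∀ a ∈ T, w bot < w a := fun a ha => hw a (List.mem_cons_of_mem _ ha)
    have hmax : ∀ a ∈ T, w a ≤ w b := fun a ha => List.rel_of_pairwise_cons hs ha
    have hwb : w bot < w b := hw b List.mem_cons_self
    by_cases hbL : b ∈ L
    · have hmem : ∀ a ∈ L, w a ≤ w b := by
        intro a ha
        have : a ∈ b :: T := by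
          have := Multiset.mem_of_le hle (by simpa using ha)
          simpa using this
        rcases List.mem_cons.mp this with h' | h'
        · exact h' ▸ le_refl _
        · exact hmax a h'
      have h1 := casc_move_front u w bot hu L b hbL hmem
      have herase : (↑(L.erase b) : Multiset α) ≤ ↑T := by
        have := Multiset.erase_le_erase b hle
        simpa [Multiset.erase_cons_head] using this
      have h2 := ih (L.erase b) hsT hwT herase
      have h3 := (hu b).1; have h4 := (hu b).2
      calc cascadeF u w (L ++ [bot])
          ≤ u b * w b + (1 - u b) * cascadeF u w (L.erase b ++ [bot]) := h1
        _ ≤ u b * w b + (1 - u b) * cascadeF u w (T ++ [bot]) := by nlinarith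
        _ = cascadeF u w ((b :: T) ++ [bot]) := by simp [cascadeF]
    · have hLT : (↑L : Multiset α) ≤ ↑T := by
        rw [Multiset.le_iff_count] at hle ⊢
        intro a
        have := hle a
        by_cases hab : a = b
        · subst hab
          have : Multiset.count a (↑L : Multiset α) = 0 := by
            simp [Multiset.count_eq_zero, hbL]
          simp [this]
        · simpa [Multiset.count_cons, List.count_cons, hab, Ne.symm hab] using this
      have h2 := ih L hsT hwT hLT
      have h3 := (hu b).1; have h4 := (hu b).2
      have hub := casc_ub u w bot hu hbot T (w b) hmax hwb.le
      calc cascadeF u w (L ++ [bot]) ≤ cascadeF u w (T ++ [bot]) := h2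
        _ ≤ u b * w b + (1 - u b) * cascadeF u w (T ++ [bot]) := by nlinarith
        _ = cascadeF u w ((b :: T) ++ [bot]) := by simp [cascadeF]

end Aux

/-- Including additional items with weight above `w(a_⊥)` never decreases the
optimally-ordered cascading reward:
`f((DesW(X), a_⊥), u, w) ≤ f((DesW(X ∪ X'), a_⊥), u, w)`, where `DesW(Y)` denotes
a descending-`w` ordering of the finite set `Y`. -/
theorem include_items_above_bot {α : Type*} [DecidableEq α] (u w : α → ℝ) (bot : α)
    (hu : ∀ a, 0 ≤ u a ∧ u a ≤ 1) (hbot : u bot = 1)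
    (X X' : Finset α) (hdisj : Disjoint X X')
    (hbX : bot ∉ X) (hbX' : bot ∉ X')
    (hw : ∀ a ∈ X ∪ X', w bot < w a)
    (LX LU : List α)
    (hLXp : LX.Perm X.toList) (hLXs : LX.Pairwise (fun a b => w b ≤ w a))
    (hLUp : LU.Perm (X ∪ X').toList) (hLUs : LU.Pairwise (fun a b => w b ≤ w a)) :
    cascadeF u w (LX ++ [bot]) ≤ cascadeF u w (LU ++ [bot]) := by
  apply casc_main u w bot hu hbot LU LX hLUs
  · intro a ha
    exact hw a (by simpa using hLUp.mem_iff.mp ha)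
  · have h1 : (↑LX : Multiset α) = X.val := by
      rw [← Finset.coe_toList X, Multiset.coe_eq_coe]; exact hLXp
    have h2 : (↑LU : Multiset α) = (X ∪ X').val := by
      rw [← Finset.coe_toList (X ∪ X'), Multiset.coe_eq_coe]; exact hLUp
    rw [h1, h2]
    exact Finset.val_le_iff.mpr Finset.subset_union_left
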